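/- arXiv:2207.02846 — 2 statements merged into one kernel-verified Lean document; each statement's English description precedes it below -/
import Mathlib

section
/- With e ∈ ℝⁿ sorted ascending (indices 2,…,n used for neighbors, e_1 corresponding to the diagonal being excluded), the solution z of the simplex projection has exactly c nonzero entries (‖z‖₀ = c) if and only if γ satisfies (c/2)e_{c+1} − (1/2)∑_{j=2}^{c+1} e_j − α < γ ≤ (c/2)e_{c+2} − (1/2)∑_{j=2}^{c+1} e_j − α. -/
noncomputable def Gaux (e : ℕ → ℝ) (k : ℕ) : ℝ :=
  (k : ℝ) / 2 * e (k + 1) - 1 / 2 * ∑ j ∈ Finset.Icc 2 (k + 1), e j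

lemma Gaux_succ (e : ℕ → ℝ) (k : ℕ) :
    Gaux e (k + 1) = (k : ℝ) / 2 * e (k + 2) - 1 / 2 * ∑ j ∈ Finset.Icc 2 (k + 1), e j := by
  unfold Gaux
  rw [Finset.sum_Icc_succ_top (by omega : 2 ≤ k + 2)]
  push_cast; ring

lemma Gaux_step (n : ℕ) (e : ℕ → ℝ)
    (hsort : ∀ i j : ℕ, 2 ≤ i → i ≤ j → j ≤ n → e i ≤ e j)
    (m : ℕ) (hmn : m + 2 ≤ n) : Gaux e m ≤ Gaux e (m + 1) := by
  rcases Nat.eq_zero_or_pos m with rfl | hm1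
  · rw [Gaux_succ]
    unfold Gaux
    norm_num
  rw [Gaux_succ]
  unfold Gaux
  have h : e (m + 1) ≤ e (m + 2) := hsort (m + 1) (m + 2) (by omega) (Nat.le_succ _) hmn
  have hm : (0 : ℝ) ≤ (m : ℝ) := Nat.cast_nonneg m
  nlinarith

lemma Gaux_mono (n : ℕ) (e : ℕ → ℝ)
    (hsort : ∀ i j : ℕ, 2 ≤ i → i ≤ j → j ≤ n → e i ≤ e j) :
    ∀ p q : ℕ, p ≤ q → q + 1 ≤ n → Gaux e p ≤ Gaux e q := by
  intro p q hpq
  induction hpq with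
  | refl => intro _; exact le_rfl
  | @step m h ih =>
    intro hqn
    exact le_trans (ih (by omega)) (Gaux_step n e hsort m (by omega))

/-- For min_z ½‖z + e/(2(α+γ))‖² s.t. zᵀ1 = 1, z ≥ 0, z₁ = 0, with
e₂ ≤ e₃ ≤ ⋯ ≤ e_n: a minimizer z has exactly c nonzero entries (the support being
{2,…,c+1}) iff (c/2)e_{c+1} − (1/2)∑_{j=2}^{c+1} e_j − α < γ ≤
(c/2)e_{c+2} − (1/2)∑_{j=2}^{c+1} e_j − α. -/
theorem stmt_11 (n : ℕ) (e : ℕ → ℝ) (α γ : ℝ) (hpos : 0 < α + γ)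
    (hsort : ∀ i j : ℕ, 2 ≤ i → i ≤ j → j ≤ n → e i ≤ e j)
    (c : ℕ) (hc1 : 1 ≤ c) (hc2 : c ≤ n - 2)
    (z : ℕ → ℝ) (hz1 : ∑ j ∈ Finset.Icc 1 n, z j = 1)
    (hz0 : ∀ j, 0 ≤ z j) (hzdiag : z 1 = 0)
    (hmin : ∀ w : ℕ → ℝ, (∑ j ∈ Finset.Icc 1 n, w j = 1) → (∀ j, 0 ≤ w j) → w 1 = 0 →
      (1 : ℝ) / 2 * ∑ j ∈ Finset.Icc 1 n, (z j + e j / (2 * (α + γ))) ^ 2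
        ≤ (1 : ℝ) / 2 * ∑ j ∈ Finset.Icc 1 n, (w j + e j / (2 * (α + γ))) ^ 2) :
    (∀ j : ℕ, 2 ≤ j → j ≤ n → (0 < z j ↔ j ≤ c + 1)) ↔
    ((c : ℝ) / 2 * e (c + 1) - 1 / 2 * ∑ j ∈ Finset.Icc 2 (c + 1), e j - α < γ ∧
      γ ≤ (c : ℝ) / 2 * e (c + 2) - 1 / 2 * ∑ j ∈ Finset.Icc 2 (c + 1), e j - α) := by
  classical
  have hn3 : 3 ≤ n := by omega
  have hB : (0 : ℝ) < 2 * (α + γ) := by linarith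
  have hBne : (2 * (α + γ)) ≠ 0 := ne_of_gt hB
  -- key optimality condition
  have key : ∀ i j : ℕ, 2 ≤ i → i ≤ n → 2 ≤ j → j ≤ n → 0 < z j →
      z j + e j / (2 * (α + γ)) ≤ z i + e i / (2 * (α + γ)) := by
    intro i j hi2 hin hj2 hjn hzj
    by_cases hij : i = j
    · subst hij; exact le_rfl
    have hji : j ≠ i := fun h => hij h.symm
    have hstep : ∀ ε : ℝ, 0 < ε → ε ≤ z j →
        z j + e j / (2 * (α + γ)) - (z i + e i / (2 * (α + γ))) ≤ ε := by
      intro ε hε hεz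
      set w : ℕ → ℝ := fun t => z t + (if t = i then ε else 0) - (if t = j then ε else 0)
        with hw
      have hi : i ∈ Finset.Icc 1 n := Finset.mem_Icc.2 ⟨by omega, hin⟩
      have hj : j ∈ Finset.Icc 1 n := Finset.mem_Icc.2 ⟨by omega, hjn⟩
      have hw1 : ∑ t ∈ Finset.Icc 1 n, w t = 1 := by
        simp only [hw]
        rw [Finset.sum_sub_distrib, Finset.sum_add_distrib, hz1,
          Finset.sum_ite_eq' (Finset.Icc 1 n) i (fun _ => ε),
          Finset.sum_ite_eq' (Finset.Icc 1 n) j (fun _ => ε), if_pos hi, if_pos hj]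
        ring
      have hw0 : ∀ t, 0 ≤ w t := by
        intro t
        simp only [hw]
        by_cases hti : t = i
        · subst hti
          simp only [if_pos, if_neg hij, eq_self_iff_true, if_true]
          have := hz0 t; linarith
        by_cases htj : t = j
        · subst htj
          simp only [if_neg hji, eq_self_iff_true, if_true]
          linarith
        · rw [if_neg hti, if_neg htj]
          have := hz0 t; linarith
      have hwd : w 1 = 0 := by
        simp only [hw]
        rw [if_neg (by omega : (1:ℕ) ≠ i), if_neg (by omega : (1:ℕ) ≠ j)]
        rw [hzdiag]; ring
      have H := hmin w hw1 hw0 hwd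
      have hpt : ∀ t, (w t + e t / (2*(α+γ)))^2 - (z t + e t / (2*(α+γ)))^2
          = (if t = i then 2*ε*(z i + e i/(2*(α+γ))) + ε^2 else 0)
            + (if t = j then -(2*ε*(z j + e j/(2*(α+γ)))) + ε^2 else 0) := by
        intro t
        by_cases hti : t = i
        · subst hti
          simp only [hw, if_pos, if_neg hij, eq_self_iff_true, if_true]
          ring
        by_cases htj : t = j
        · subst htj
          simp only [hw, if_neg hji, eq_self_iff_true, if_true]
          ring
        · simp only [hw, if_neg hti, if_neg htj]
          ring
      have hsum : ∑ t ∈ Finset.Icc 1 n,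
            ((w t + e t / (2*(α+γ)))^2 - (z t + e t / (2*(α+γ)))^2)
          = (2*ε*(z i + e i/(2*(α+γ))) + ε^2)
            + (-(2*ε*(z j + e j/(2*(α+γ)))) + ε^2) := by
        simp only [hpt]
        rw [Finset.sum_add_distrib,
          Finset.sum_ite_eq' (Finset.Icc 1 n) i (fun _ => 2*ε*(z i + e i/(2*(α+γ))) + ε^2),
          Finset.sum_ite_eq' (Finset.Icc 1 n) j
            (fun _ => -(2*ε*(z j + e j/(2*(α+γ)))) + ε^2),
          if_pos hi, if_pos hj]
      have h0 : (0:ℝ) ≤ (2*ε*(z i + e i/(2*(α+γ))) + ε^2)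
          + (-(2*ε*(z j + e j/(2*(α+γ)))) + ε^2) := by
        rw [← hsum, Finset.sum_sub_distrib]
        linarith
      nlinarith [h0, hε]
    by_contra hcon
    push_neg at hcon
    have hd : 0 < z j + e j / (2*(α+γ)) - (z i + e i / (2*(α+γ))) := by linarith
    set d := z j + e j / (2*(α+γ)) - (z i + e i / (2*(α+γ))) with hdd
    have h1 := hstep (min (d/2) (z j)) (lt_min (by linarith) hzj) (min_le_right _ _)
    have h2 : min (d/2) (z j) ≤ d/2 := min_le_left _ _
    linarith
  -- support bounds lemma
  have hbounds : ∀ k : ℕ, 1 ≤ k → k + 1 ≤ n →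
      (∀ j, 2 ≤ j → j ≤ k + 1 → 0 < z j) →
      (∀ j, k + 1 < j → j ≤ n → z j = 0) →
      (Gaux e k - α < γ ∧ (k + 2 ≤ n → γ ≤ Gaux e (k + 1) - α)) := by
    intro k hk1 hkn hpos' hzero'
    have hsub : Finset.Icc 2 (k+1) ⊆ Finset.Icc 1 n := by
      intro x hx; simp only [Finset.mem_Icc] at *; omega
    have hzsum : ∑ j ∈ Finset.Icc 2 (k+1), z j = 1 := by
      rw [← hz1]
      apply Finset.sum_subset hsub
      intro x hx hnx
      simp only [Finset.mem_Icc] at hx hnx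
      by_cases hx1 : x = 1
      · rw [hx1]; exact hzdiag
      · exact hzero' x (by omega) hx.2
    have hcard : (Finset.Icc 2 (k+1)).card = k := by rw [Nat.card_Icc]; omega
    have heq : ∀ j ∈ Finset.Icc 2 (k+1),
        z j + e j / (2*(α+γ)) = z (k+1) + e (k+1) / (2*(α+γ)) := by
      intro j hj
      simp only [Finset.mem_Icc] at hj
      have h1 := key (k+1) j (by omega) hkn hj.1 (by omega) (hpos' j hj.1 hj.2)
      have h2 := key j (k+1) hj.1 (by omega) (by omega) hkn (hpos' (k+1) (by omega) le_rfl)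
      linarith
    have hsumkey : 1 + (∑ j ∈ Finset.Icc 2 (k+1), e j) / (2*(α+γ))
        = (k:ℝ) * (z (k+1) + e (k+1) / (2*(α+γ))) := by
      have h := Finset.sum_congr rfl heq
      rw [Finset.sum_const, hcard, nsmul_eq_mul, Finset.sum_add_distrib, hzsum,
        ← Finset.sum_div] at h
      exact h
    field_simp at hsumkey
    have hk0 : (0:ℝ) < (k:ℝ) := by exact_mod_cast hk1
    set S := ∑ j ∈ Finset.Icc 2 (k+1), e j with hS
    constructor
    · -- lower bound
      have hzk : 0 < z (k+1) := hpos' (k+1) (by omega) le_rfl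
      have hGk : Gaux e k = (k:ℝ)/2 * e (k+1) - 1/2 * S := rfl
      rw [hGk]
      nlinarith [mul_pos (mul_pos hk0 hB) hzk, hsumkey]
    · -- upper bound
      intro hk2n
      have hz2 : z (k+2) = 0 := hzero' (k+2) (by omega) hk2n
      have hle := key (k+2) (k+1) (by omega) hk2n (by omega) (by omega)
        (hpos' (k+1) (by omega) le_rfl)
      rw [hz2] at hle
      rw [Gaux_succ]
      have hle' : (z (k+1) + e (k+1) / (2*(α+γ))) * (2*(α+γ)) ≤
          (0 + e (k+2) / (2*(α+γ))) * (2*(α+γ)) :=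
        mul_le_mul_of_nonneg_right hle (le_of_lt hB)
      have he1 : (z (k+1) + e (k+1) / (2*(α+γ))) * (2*(α+γ))
          = z (k+1) * (2*(α+γ)) + e (k+1) := by field_simp
      have he2 : (0 + e (k+2) / (2*(α+γ))) * (2*(α+γ)) = e (k+2) := by field_simp; ring
      rw [he1, he2] at hle'
      nlinarith [mul_le_mul_of_nonneg_left hle' (le_of_lt hk0), hsumkey]
  have hGid : (c : ℝ) / 2 * e (c + 2) - 1 / 2 * ∑ j ∈ Finset.Icc 2 (c + 1), e j - α
      = Gaux e (c+1) - α := by rw [Gaux_succ]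
  have hGc : (c : ℝ) / 2 * e (c + 1) - 1 / 2 * ∑ j ∈ Finset.Icc 2 (c + 1), e j - α
      = Gaux e c - α := rfl
  constructor
  · intro hsupp
    have hpos' : ∀ j, 2 ≤ j → j ≤ c + 1 → 0 < z j := fun j h2 hj =>
      (hsupp j h2 (by omega)).2 hj
    have hzero' : ∀ j, c + 1 < j → j ≤ n → z j = 0 := by
      intro j hj hn
      rcases (hz0 j).lt_or_eq with h | h
      · exact absurd ((hsupp j (by omega) hn).1 h) (by omega)
      · exact h.symm
    obtain ⟨hlo, hhi⟩ := hbounds c hc1 (by omega) hpos' hzero'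
    rw [hGc, hGid]
    exact ⟨hlo, hhi (by omega)⟩
  · rintro ⟨hlo, hhi⟩
    rw [hGc] at hlo
    rw [hGid] at hhi
    -- find the support
    have hex : ∃ j ∈ Finset.Icc 2 n, 0 < z j := by
      by_contra hcon
      push_neg at hcon
      have : ∑ j ∈ Finset.Icc 1 n, z j = 0 := by
        apply Finset.sum_eq_zero
        intro x hx
        simp only [Finset.mem_Icc] at hx
        by_cases hx1 : x = 1
        · rw [hx1]; exact hzdiag
        · exact le_antisymm (hcon x (Finset.mem_Icc.2 ⟨by omega, hx.2⟩)) (hz0 x)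
      rw [this] at hz1; norm_num at hz1
    set T := (Finset.Icc 2 n).filter (fun j => 0 < z j) with hT
    have hTne : T.Nonempty := by
      obtain ⟨j, hj, hjz⟩ := hex
      exact ⟨j, Finset.mem_filter.2 ⟨hj, hjz⟩⟩
    set M := T.max' hTne with hM
    have hMT : M ∈ T := T.max'_mem hTne
    have hM2 : 2 ≤ M := (Finset.mem_Icc.1 (Finset.mem_filter.1 hMT).1).1
    have hMn : M ≤ n := (Finset.mem_Icc.1 (Finset.mem_filter.1 hMT).1).2
    have hMz : 0 < z M := (Finset.mem_filter.1 hMT).2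
    have hmax : ∀ j, 2 ≤ j → j ≤ n → 0 < z j → j ≤ M := by
      intro j h2 hn hz
      exact T.le_max' j (Finset.mem_filter.2 ⟨Finset.mem_Icc.2 ⟨h2, hn⟩, hz⟩)
    -- down-closedness
    have hdc : ∀ i j : ℕ, 2 ≤ i → i ≤ j → j ≤ n → 0 < z j → 0 < z i := by
      intro i j h2 hij hjn hzj
      have h1 := key i j h2 (by omega) (by omega) hjn hzj
      have h2' := hsort i j h2 hij hjn
      have h3 : e i / (2*(α+γ)) ≤ e j / (2*(α+γ)) := by
        exact div_le_div_of_nonneg_right h2' (le_of_lt hB)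
      linarith
    have hposM : ∀ j, 2 ≤ j → j ≤ M → 0 < z j := fun j h2 hj =>
      hdc j M h2 hj hMn hMz
    have hzeroM : ∀ j, M < j → j ≤ n → z j = 0 := by
      intro j hj hn
      rcases (hz0 j).lt_or_eq with h | h
      · exact absurd (hmax j (by omega) hn h) (by omega)
      · exact h.symm
    obtain ⟨k, hkM⟩ : ∃ k, M = k + 1 := ⟨M - 1, by omega⟩
    have hk1 : 1 ≤ k := by omega
    have hkn : k + 1 ≤ n := by omega
    have hb := hbounds k hk1 hkn (by rw [← hkM]; exact hposM) (by rw [← hkM]; exact hzeroM)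
    have hkc : k = c := by
      by_contra hne
      rcases Nat.lt_or_ge k c with h | h
      · have hup := hb.2 (by omega)
        have hmono := Gaux_mono n e hsort (k+1) c h (by omega)
        linarith
      · have hck : c < k := by omega
        rcases Nat.lt_or_ge (k + 1) n with h2 | h2
        · have hmono := Gaux_mono n e hsort (c+1) k hck (by omega)
          linarith [hb.1]
        · have hmono := Gaux_mono n e hsort (c+1) k (by omega) (by omega)
          linarith [hb.1]
    subst hkc
    intro j h2 hn
    constructor
    · intro hz
      have := hmax j h2 hn hz
      omega
    · intro hj
      exact hposM j h2 (by omega)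
end

section
/- Setting γ = (c/2)e_{c+2} − (1/2)∑_{j=2}^{c+1} e_j − α (the maximal admissible value) and assuming e_{c+2} > e_{c+1}, the optimal simplex projection has the closed form z_j = (e_{c+2} − e_{j+1}) / (c·e_{c+2} − ∑_{h=2}^{c+1} e_h) for j ≤ c and z_j = 0 for j > c, and these values are nonnegative and sum to 1. -/
/-- With γ = (c/2)e_{c+2} − (1/2)∑_{j=2}^{c+1} e_j − α (the maximal admissible value)
and e_{c+2} > e_{c+1}, the simplex projection min_z ½‖z + e/(2(α+γ))‖² s.t. zᵀ1=1,
z ≥ 0 (z indexed by the n−1 neighbors, z_j paired with e_{j+1}) is solved by the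
closed form z_j = (e_{c+2} − e_{j+1})/(c·e_{c+2} − ∑_{h=2}^{c+1} e_h) for j ≤ c and
z_j = 0 for j > c; these values are nonnegative and sum to 1. -/
theorem stmt_12 (n : ℕ) (e : ℕ → ℝ)
    (hsort : ∀ i j : ℕ, 2 ≤ i → i ≤ j → j ≤ n → e i ≤ e j)
    (c : ℕ) (hc1 : 1 ≤ c) (hcn : c + 2 ≤ n) (hgap : e (c + 1) < e (c + 2))
    (α γ : ℝ)
    (hγ : γ = (c : ℝ) / 2 * e (c + 2) - 1 / 2 * ∑ j ∈ Finset.Icc 2 (c + 1), e j - α)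
    (hpos : 0 < α + γ) :
    let zstar : ℕ → ℝ := fun j =>
      if 1 ≤ j ∧ j ≤ c then
        (e (c + 2) - e (j + 1)) / ((c : ℝ) * e (c + 2) - ∑ h ∈ Finset.Icc 2 (c + 1), e h)
      else 0
    (∑ j ∈ Finset.Icc 1 (n - 1), zstar j = 1) ∧
    (∀ j, 0 ≤ zstar j) ∧
    (∀ w : ℕ → ℝ, (∑ j ∈ Finset.Icc 1 (n - 1), w j = 1) → (∀ j, 0 ≤ w j) →
      (1 : ℝ) / 2 * ∑ j ∈ Finset.Icc 1 (n - 1), (zstar j + e (j + 1) / (2 * (α + γ))) ^ 2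
        ≤ (1 : ℝ) / 2 * ∑ j ∈ Finset.Icc 1 (n - 1), (w j + e (j + 1) / (2 * (α + γ))) ^ 2) := by
  intro zstar
  have hD : (c : ℝ) * e (c + 2) - ∑ h ∈ Finset.Icc 2 (c + 1), e h = 2 * (α + γ) := by
    rw [hγ]; ring
  set D : ℝ := (c : ℝ) * e (c + 2) - ∑ h ∈ Finset.Icc 2 (c + 1), e h with hDdef
  have hDpos : 0 < D := by rw [hD]; linarith
  have hsub : Finset.Icc 1 c ⊆ Finset.Icc 1 (n - 1) :=
    Finset.Icc_subset_Icc le_rfl (by omega)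
  have hreindex : ∑ j ∈ Finset.Icc 1 c, e (j + 1) = ∑ h ∈ Finset.Icc 2 (c + 1), e h := by
    rw [← Finset.map_add_right_Icc 1 c 1, Finset.sum_map]
    rfl
  have hnn : ∀ j, 0 ≤ zstar j := by
    intro j
    simp only [zstar]
    split_ifs with h
    · apply div_nonneg _ hDpos.le
      have : e (j + 1) ≤ e (c + 2) := hsort (j + 1) (c + 2) (by omega) (by omega) hcn
      linarith
    · exact le_refl 0
  have hsum1 : ∑ j ∈ Finset.Icc 1 (n - 1), zstar j = 1 := by
    rw [← Finset.sum_subset hsub (by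
      intro j hj hj'
      simp only [Finset.mem_Icc] at hj hj'
      have : ¬(1 ≤ j ∧ j ≤ c) := by omega
      simp [zstar, this])]
    have h1 : ∑ j ∈ Finset.Icc 1 c, zstar j
        = ∑ j ∈ Finset.Icc 1 c, (e (c + 2) - e (j + 1)) / D := by
      apply Finset.sum_congr rfl
      intro j hj
      simp only [Finset.mem_Icc] at hj
      simp [zstar, hj.1, hj.2]
      rfl
    rw [h1, ← Finset.sum_div, Finset.sum_sub_distrib, hreindex, Finset.sum_const,
      Nat.card_Icc]
    simp only [Nat.add_sub_cancel, nsmul_eq_mul]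
    field_simp
    rfl
  refine ⟨hsum1, hnn, ?_⟩
  intro w hw hwn
  set a : ℕ → ℝ := fun j => e (j + 1) / (2 * (α + γ)) with hadef
  have ha : ∀ j, a j = e (j + 1) / D := by intro j; simp only [hadef, hD]
  set τ : ℝ := e (c + 2) / D with hτ
  have hzero : ∀ j ∈ Finset.Icc 1 (n - 1), zstar j + a j = τ ∨
      (zstar j = 0 ∧ τ ≤ a j) := by
    intro j hj
    simp only [Finset.mem_Icc] at hj
    by_cases h : j ≤ c
    · left
      have hmem : (1 ≤ j ∧ j ≤ c) := ⟨hj.1, h⟩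
      simp only [zstar, if_pos hmem, ha, hτ]
      change (e (c + 2) - e (j + 1)) / D + e (j + 1) / D = e (c + 2) / D
      rw [← add_div, sub_add_cancel]
    · right
      refine ⟨by simp [zstar, h], ?_⟩
      rw [ha, hτ]
      have : e (c + 2) ≤ e (j + 1) := hsort (c + 2) (j + 1) (by omega) (by omega) (by omega)
      gcongr
  have key : 0 ≤ ∑ j ∈ Finset.Icc 1 (n - 1), (zstar j + a j - τ) * (w j - zstar j) := by
    apply Finset.sum_nonneg
    intro j hj
    rcases hzero j hj with h | ⟨h0, hge⟩
    · rw [h]; simp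
    · rw [h0]
      have : (0 + a j - τ) * (w j - 0) = (a j - τ) * w j := by ring
      rw [this]
      exact mul_nonneg (by linarith) (hwn j)
  have hsdiff : ∑ j ∈ Finset.Icc 1 (n - 1), (w j - zstar j) = 0 := by
    rw [Finset.sum_sub_distrib, hw, hsum1]; ring
  have hsq : 0 ≤ ∑ j ∈ Finset.Icc 1 (n - 1), (w j - zstar j) ^ 2 :=
    Finset.sum_nonneg fun j _ => sq_nonneg _
  have hexp : ∑ j ∈ Finset.Icc 1 (n - 1), (w j + a j) ^ 2
      = ∑ j ∈ Finset.Icc 1 (n - 1), (zstar j + a j) ^ 2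
        + ∑ j ∈ Finset.Icc 1 (n - 1), (w j - zstar j) ^ 2
        + 2 * τ * ∑ j ∈ Finset.Icc 1 (n - 1), (w j - zstar j)
        + 2 * ∑ j ∈ Finset.Icc 1 (n - 1), (zstar j + a j - τ) * (w j - zstar j) := by
    rw [Finset.mul_sum, Finset.mul_sum, ← Finset.sum_add_distrib, ← Finset.sum_add_distrib,
      ← Finset.sum_add_distrib]
    exact Finset.sum_congr rfl fun j _ => by ring
  show (1 : ℝ) / 2 * ∑ j ∈ Finset.Icc 1 (n - 1), (zstar j + a j) ^ 2
      ≤ (1 : ℝ) / 2 * ∑ j ∈ Finset.Icc 1 (n - 1), (w j + a j) ^ 2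
  rw [hsdiff] at hexp
  nlinarith [hexp, hsq, key]
end
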